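/- Let I = [a,b] be an interval with b >= a + n - 2 and n >= 2, and suppose that in each round of I the communication graph contains a fixed collection S of l >= 1 vertex-stable root components R_1, ..., R_l (and these are all root components of each graph in I). Then for every x in [a, b - n + 2] and every process q in Pi, there exists a process p in the union of the R_i with cd_x(p,q) <= n - 1; i.e., S is (n-1)-network-bounded. -/
import Mathlib


/-- A root component of a directed graph `G`: a strongly connected component
(maximal set of mutually reachable vertices) with no incoming edges from outside. -/
def IsRootComponent {V : Type*} (G : V → V → Prop) (R : Set V) : Prop :=
  R.Nonempty ∧ (∀ p ∈ R, ∀ q ∈ R, Relation.ReflTransGen G p q) ∧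
    ∀ p ∈ R, ∀ q, G q p → q ∈ R

/-- A causal influence chain of length `k` from `p` (starting in round `r`) to `q`. -/
def InflChain {V : Type*} (G : ℕ → V → V → Prop) (r : ℕ) (p q : V) (k : ℕ) : Prop :=
  ∃ f : ℕ → V, f 0 = p ∧ f k = q ∧ ∀ i < k, f i = f (i + 1) ∨ G (r + i) (f i) (f (i + 1))

/-- The dynamic causal distance `cd_r(p,q)`: length of the shortest causal influence
chain from `p` starting in round `r` to `q` (`⊤` if none exists, `1` for `p = q`). -/
noncomputable def cd {V : Type*} (G : ℕ → V → V → Prop) (r : ℕ) (p q : V) : ℕ∞ :=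
  sInf {k : ℕ∞ | ∃ m : ℕ, k = (m : ℕ∞) ∧ 1 ≤ m ∧ InflChain G r p q m}
section Aux
open Relation

lemma exists_max_aux {V : Type*} [Fintype V] (g : V → V → Prop) :
    ∀ n q, Set.ncard {t | ReflTransGen g t q} ≤ n →
      ∃ p, ReflTransGen g p q ∧ ∀ t, ReflTransGen g t p → ReflTransGen g p t := by
  intro n
  induction n with
  | zero =>
    intro q hq
    exfalso
    have h1 : 0 < Set.ncard {t | ReflTransGen g t q} := by
      rw [Set.ncard_pos (Set.toFinite _)]
      exact ⟨q, ReflTransGen.refl⟩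
    omega
  | succ n ih =>
    intro q hq
    by_cases hmax : ∀ t, ReflTransGen g t q → ReflTransGen g q t
    · exact ⟨q, ReflTransGen.refl, hmax⟩
    · push_neg at hmax
      obtain ⟨t, ht, hnt⟩ := hmax
      have hss : {s | ReflTransGen g s t} ⊂ {s | ReflTransGen g s q} :=
        ⟨fun s hs => hs.trans ht, fun h => hnt (h ReflTransGen.refl)⟩
      have hc : Set.ncard {s | ReflTransGen g s t} < Set.ncard {s | ReflTransGen g s q} :=
        Set.ncard_lt_ncard hss (Set.toFinite _)
      obtain ⟨p, hp, hpm⟩ := ih t (by omega)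
      exact ⟨p, hp.trans ht, hpm⟩

lemma exists_root_reach {V : Type*} [Fintype V] (g : V → V → Prop) (q : V) :
    ∃ C : Set V, IsRootComponent g C ∧ ∃ p ∈ C, ReflTransGen g p q := by
  obtain ⟨p, hpq, hpm⟩ := exists_max_aux g (Set.ncard {t | ReflTransGen g t q}) q le_rfl
  refine ⟨{r | ReflTransGen g p r ∧ ReflTransGen g r p},
    ⟨⟨p, ReflTransGen.refl, ReflTransGen.refl⟩, ?_, ?_⟩, p,
    ⟨ReflTransGen.refl, ReflTransGen.refl⟩, hpq⟩
  · rintro u ⟨-, hup⟩ v ⟨hpv, -⟩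
    exact hup.trans hpv
  · rintro u ⟨-, hup⟩ w hw
    have hwp : ReflTransGen g w p := (ReflTransGen.single hw).trans hup
    exact ⟨hpm w hwp, hwp⟩

lemma exists_boundary {V : Type*} (g : V → V → Prop) (A : Set V) {p q : V}
    (h : ReflTransGen g p q) (hp : p ∈ A) (hq : q ∉ A) :
    ∃ u ∈ A, ∃ w, w ∉ A ∧ g u w := by
  induction h with
  | refl => exact absurd hp hq
  | tail h' e ih =>
    rename_i c d
    by_cases hc : c ∈ A
    · exact ⟨c, hc, d, hq, e⟩
    · exact ih hc

end Aux

theorem stmt_6 {V : Type*} [Fintype V] (G : ℕ → V → V → Prop) (a b l : ℕ)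
    (hl : 1 ≤ l) (R : Fin l → Set V)
    (hn : 2 ≤ Fintype.card V)
    (hVSRC : ∀ i : Fin l, ∀ x, a ≤ x → x ≤ b → IsRootComponent (G x) (R i))
    (hall : ∀ x, a ≤ x → x ≤ b → ∀ C : Set V, IsRootComponent (G x) C → ∃ i, C = R i)
    (hlen : a + Fintype.card V ≤ b + 2) :
    ∀ x, a ≤ x → x + Fintype.card V ≤ b + 2 → ∀ q : V,
      ∃ i, ∃ p ∈ R i, cd G x p q ≤ ((Fintype.card V - 1 : ℕ) : ℕ∞) := by
  classical
  intro x hax hxb q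
  set n := Fintype.card V with hncard
  set S : ℕ → Set V := fun k => {v | ∃ i, ∃ p ∈ R i, InflChain G x p v k} with hSdef
  -- constant chains: members of the R i are in every S k
  have hRin : ∀ k, ∀ i : Fin l, ∀ p ∈ R i, p ∈ S k := by
    intro k i p hp
    exact ⟨i, p, hp, fun _ => p, rfl, rfl, fun j hj => Or.inl rfl⟩
  -- monotonicity
  have hmono : ∀ k, S k ⊆ S (k + 1) := by
    rintro k v ⟨i, p, hp, f, hf0, hfk, hstep⟩
    refine ⟨i, p, hp, fun j => f (min j k), by simp [hf0], by simp [hfk], ?_⟩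
    intro j hj
    rcases lt_or_ge j k with h | h
    · have h1 : min j k = j := min_eq_left h.le
      have h2 : min (j + 1) k = j + 1 := min_eq_left h
      simp only [h1, h2]
      exact hstep j h
    · have hjk : j = k := by omega
      subst hjk
      simp
  -- growth by one edge
  have hgrow : ∀ k v w, v ∈ S k → G (x + k) v w → w ∈ S (k + 1) := by
    rintro k v w ⟨i, p, hp, f, hf0, hfk, hstep⟩ he
    refine ⟨i, p, hp, fun j => if j ≤ k then f j else w, by simp [hf0], by simp, ?_⟩
    intro j hj
    rcases lt_or_ge j k with h | h
    · simp only [if_pos h.le, if_pos (by omega : j + 1 ≤ k)]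
      exact hstep j h
    · have hjk : j = k := by omega
      subst hjk
      simp only [if_pos le_rfl, if_neg (by omega : ¬ j + 1 ≤ j), hfk]
      exact Or.inr he
  have hab : a ≤ b := by omega
  -- key cardinality growth
  have key : ∀ k, k + 1 ≤ n → S k = Set.univ ∨ k + 1 ≤ (S k).ncard := by
    intro k
    induction k with
    | zero =>
      intro _
      right
      obtain ⟨p0, hp0⟩ := (hVSRC ⟨0, hl⟩ a le_rfl hab).1
      have : (S 0).Nonempty := ⟨p0, hRin 0 ⟨0, hl⟩ p0 hp0⟩
      have := (Set.ncard_pos (Set.toFinite (S 0))).2 this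
      omega
    | succ k ih =>
      intro hk
      rcases ih (by omega) with h | h
      · left
        apply Set.eq_univ_of_univ_subset
        rw [← h]; exact hmono k
      · by_cases huniv : S k = Set.univ
        · left
          apply Set.eq_univ_of_univ_subset
          rw [← huniv]; exact hmono k
        · right
          obtain ⟨q0, hq0⟩ := Set.ne_univ_iff_exists_notMem _ |>.1 huniv
          have hr1 : a ≤ x + k := by omega
          have hr2 : x + k ≤ b := by omega
          obtain ⟨C, hC, p, hpC, hreach⟩ := exists_root_reach (G (x + k)) q0
          obtain ⟨i, hCi⟩ := hall (x + k) hr1 hr2 C hC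
          have hpS : p ∈ S k := hRin k i p (hCi ▸ hpC)
          obtain ⟨u, huS, w, hwS, he⟩ := exists_boundary (G (x + k)) (S k) hreach hpS hq0
          have hwS1 : w ∈ S (k + 1) := hgrow k u w huS he
          have hins : insert w (S k) ⊆ S (k + 1) :=
            Set.insert_subset hwS1 (hmono k)
          have h1 : (insert w (S k)).ncard = (S k).ncard + 1 :=
            Set.ncard_insert_of_notMem hwS (Set.toFinite _)
          have h2 : (insert w (S k)).ncard ≤ (S (k + 1)).ncard :=
            Set.ncard_le_ncard hins (Set.toFinite _)
          omega
  -- conclude S (n-1) = univ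
  have hfin : S (n - 1) = Set.univ := by
    rcases key (n - 1) (by omega) with h | h
    · exact h
    · have hle : (Set.univ : Set V).ncard ≤ (S (n - 1)).ncard := by
        rw [Set.ncard_univ, Nat.card_eq_fintype_card]
        omega
      exact (Set.eq_of_subset_of_ncard_le (Set.subset_univ _) hle (Set.toFinite _))
  have hq : q ∈ S (n - 1) := hfin ▸ Set.mem_univ q
  obtain ⟨i, p, hp, hchain⟩ := hq
  refine ⟨i, p, hp, ?_⟩
  exact sInf_le ⟨n - 1, rfl, by omega, hchain⟩
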